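/- Let R be an irreducible root system. If β is a nonzero dominant weight lying in the root lattice ℤR, then ⟨β, α₀^∨⟩ ≥ 2, where α₀ is the highest short root. -/

import Mathlib

open RealInnerProductSpace

/-- Data of an irreducible (crystallographic, reduced) root system in a real inner
product space `V`, with a choice of positive roots `Pos`, simple roots `simples`,
Weyl group `W`, longest element `w0` and highest short root `hsr`. -/
structure RootSystemData (V : Type*) [NormedAddCommGroup V] [InnerProductSpace ℝ V] where
  R : Finset V
  Pos : Finset V
  simples : Finset V
  W : Subgroup (V ≃ₗ[ℝ] V)
  w0 : V ≃ₗ[ℝ] V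
  hsr : V
  root_nonzero : ∀ α ∈ R, α ≠ 0
  pos_subset : Pos ⊆ R
  pos_or_neg : ∀ α ∈ R, α ∈ Pos ∨ -α ∈ Pos
  pos_not_neg : ∀ α ∈ Pos, -α ∉ Pos
  simples_subset : simples ⊆ Pos
  pos_sum_simples : ∀ α ∈ Pos, ∃ c : V → ℕ, α = ∑ s ∈ simples, (c s : ℝ) • s
  refl_closed : ∀ α ∈ R, ∀ β ∈ R, β - (2 * ⟪β, α⟫ / ⟪α, α⟫) • α ∈ R
  cryst : ∀ α ∈ R, ∀ β ∈ R, ∃ n : ℤ, 2 * ⟪β, α⟫ / ⟪α, α⟫ = n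
  reduced : ∀ α ∈ R, ∀ t : ℝ, t • α ∈ R → t = 1 ∨ t = -1
  irred : ∀ S₁ S₂ : Finset V, (∀ α, α ∈ R ↔ α ∈ S₁ ∨ α ∈ S₂) →
      (∀ a ∈ S₁, ∀ b ∈ S₂, ⟪a, b⟫ = 0) → S₁ = ∅ ∨ S₂ = ∅
  W_inner : ∀ w ∈ W, ∀ x y : V, ⟪w x, w y⟫ = ⟪x, y⟫
  W_root : ∀ w ∈ W, ∀ α ∈ R, w α ∈ R
  refl_mem_W : ∀ α ∈ R, ∃ w ∈ W, ∀ x : V, w x = x - (2 * ⟪x, α⟫ / ⟪α, α⟫) • α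
  w0_mem : w0 ∈ W
  w0_pos : ∀ α ∈ Pos, -(w0 α) ∈ Pos
  hsr_pos : hsr ∈ Pos
  hsr_short : ∀ β ∈ R, ⟪hsr, hsr⟫ ≤ ⟪β, β⟫
  hsr_coroot_highest : ∀ β ∈ R, ∃ c : V → ℕ,
      (2 / ⟪hsr, hsr⟫) • hsr - (2 / ⟪β, β⟫) • β
        = ∑ s ∈ simples, (c s : ℝ) • ((2 / ⟪s, s⟫) • s)

namespace RootSystemData

variable {V : Type*} [NormedAddCommGroup V] [InnerProductSpace ℝ V] (P : RootSystemData V)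

/-- The coroot `α^∨ = 2α/⟨α,α⟩` of a root `α`. -/
noncomputable def coroot (_P : RootSystemData V) (α : V) : V := (2 / ⟪α, α⟫) • α

/-- The pairing `⟨x, α^∨⟩`. -/
noncomputable def pairing (P : RootSystemData V) (x α : V) : ℝ := ⟪x, P.coroot α⟫

/-- `ρ`, the half-sum of the positive roots. -/
noncomputable def rho : V := (2⁻¹ : ℝ) • ∑ α ∈ P.Pos, α

/-- The Coxeter number `h = ⟨ρ, α₀^∨⟩ + 1`. -/
noncomputable def coxh : ℝ := P.pairing P.rho P.hsr + 1

/-- The dot action `w · x = w(x + ρ) - ρ`. -/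
noncomputable def dot (w : V ≃ₗ[ℝ] V) (x : V) : V := w (x + P.rho) - P.rho

/-- Dominance order: `μ ≤ λ` iff `λ - μ` is a non-negative integral combination of
the simple roots. -/
def domle (μ lam : V) : Prop := ∃ c : V → ℕ, lam - μ = ∑ s ∈ P.simples, (c s : ℝ) • s

/-- A weight is dominant if it pairs non-negatively with every simple coroot. -/
def IsDominant (x : V) : Prop := ∀ α ∈ P.simples, 0 ≤ P.pairing x α

/-- Membership in the root lattice `ℤR` (the ℤ-span of the simple roots). -/
def InRootLattice (x : V) : Prop := ∃ c : V → ℤ, x = ∑ s ∈ P.simples, (c s : ℝ) • s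

end RootSystemData

/- ----------------------------------------------------------------------- -/
/- Auxiliary lemmas                                                         -/
/- ----------------------------------------------------------------------- -/

namespace RootSystemData

variable {V : Type*} [NormedAddCommGroup V] [InnerProductSpace ℝ V] (P : RootSystemData V)

lemma inner_self_pos_of_mem {α : V} (hα : α ∈ P.R) : 0 < ⟪α, α⟫ :=
  lt_of_le_of_ne real_inner_self_nonneg
    (fun h => (P.root_nonzero α hα) (inner_self_eq_zero.mp h.symm))

lemma neg_mem {α : V} (hα : α ∈ P.R) : -α ∈ P.R := by
  have h := P.refl_closed α hα α hα
  have hc : (2 * ⟪α, α⟫ / ⟪α, α⟫ : ℝ) = 2 := by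
    have := P.inner_self_pos_of_mem hα
    field_simp
  rw [hc] at h
  have : α - (2 : ℝ) • α = -α := by
    rw [two_smul]; abel
  rwa [this] at h

lemma inner_coroot_eq {x α : V} : ⟪x, P.coroot α⟫ = 2 * ⟪x, α⟫ / ⟪α, α⟫ := by
  rw [coroot, real_inner_smul_right]; ring

lemma inner_coroot_self {α : V} (hα : α ∈ P.R) : ⟪α, P.coroot α⟫ = 2 := by
  rw [P.inner_coroot_eq]
  have := P.inner_self_pos_of_mem hα
  field_simp

lemma pairing_int {γ α : V} (hγ : γ ∈ P.R) (hα : α ∈ P.R) :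
    ∃ n : ℤ, ⟪γ, P.coroot α⟫ = n := by
  obtain ⟨n, hn⟩ := P.cryst α hα γ hγ
  exact ⟨n, by rw [P.inner_coroot_eq]; exact hn⟩

/-- If two roots have negative inner product and are not opposite, their sum is a root. -/
lemma add_mem {α γ : V} (hα : α ∈ P.R) (hγ : γ ∈ P.R) (hneg : ⟪γ, α⟫ < 0)
    (hne : γ ≠ -α) : γ + α ∈ P.R := by
  have hcα := P.inner_self_pos_of_mem hα
  have hcγ := P.inner_self_pos_of_mem hγ
  obtain ⟨A, hA⟩ := P.cryst α hα γ hγ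
  obtain ⟨B, hB⟩ := P.cryst γ hγ α hα
  have hAneg : (A : ℝ) < 0 := by
    rw [← hA]
    exact div_neg_of_neg_of_pos (by linarith) hcα
  have hBneg : (B : ℝ) < 0 := by
    rw [← hB, real_inner_comm]
    exact div_neg_of_neg_of_pos (by linarith) hcγ
  have hA1 : A ≤ -1 := by
    have : A < 0 := by exact_mod_cast hAneg
    omega
  have hB1 : B ≤ -1 := by
    have : B < 0 := by exact_mod_cast hBneg
    omega
  by_cases hAm : A = -1
  · have h := P.refl_closed α hα γ hγ
    rw [hA, hAm] at h
    have : γ - ((-1 : ℤ) : ℝ) • α = γ + α := by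
      push_cast; rw [neg_one_smul]; abel
    rwa [this] at h
  by_cases hBm : B = -1
  · have h := P.refl_closed γ hγ α hα
    rw [hB, hBm] at h
    have : α - ((-1 : ℤ) : ℝ) • γ = γ + α := by
      push_cast; rw [neg_one_smul]; abel
    rwa [this] at h
  -- now A ≤ -2 and B ≤ -2, forcing proportionality, contradiction
  exfalso
  have hA2 : A ≤ -2 := by omega
  have hB2 : B ≤ -2 := by omega
  have hAB4 : (4 : ℝ) ≤ (A : ℝ) * (B : ℝ) := by
    have : (4 : ℤ) ≤ A * B := by nlinarith
    exact_mod_cast this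
  have hprod : (A : ℝ) * (B : ℝ) = 4 * (⟪γ, α⟫ * ⟪γ, α⟫) / (⟪α, α⟫ * ⟪γ, γ⟫) := by
    rw [← hA, ← hB, real_inner_comm α γ]
    field_simp
    ring
  have hCS : ⟪γ, α⟫ * ⟪γ, α⟫ ≤ ⟪γ, γ⟫ * ⟪α, α⟫ := real_inner_mul_inner_self_le γ α
  have heq : ⟪γ, α⟫ * ⟪γ, α⟫ = ⟪γ, γ⟫ * ⟪α, α⟫ := by
    rw [hprod] at hAB4
    rw [le_div_iff₀ (by positivity)] at hAB4
    nlinarith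
  -- γ is proportional to α
  set t : ℝ := ⟪γ, α⟫ / ⟪α, α⟫ with ht
  have hw : γ - t • α = 0 := by
    rw [← inner_self_eq_zero (𝕜 := ℝ)]
    have : ⟪γ - t • α, γ - t • α⟫ = ⟪γ, γ⟫ - 2 * t * ⟪γ, α⟫ + t * t * ⟪α, α⟫ := by
      simp only [inner_sub_left, inner_sub_right, real_inner_smul_left, real_inner_smul_right,
        real_inner_comm γ α]
      ring
    rw [this, ht]
    field_simp
    nlinarith
  have hγt : γ = t • α := by
    have := sub_eq_zero.mp hw
    exact this
  rcases P.reduced α hα t (by rw [← hγt]; exact hγ) with h1 | h1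
  · rw [h1, one_smul] at hγt
    rw [hγt] at hneg
    linarith
  · rw [h1, neg_one_smul] at hγt
    exact hne hγt

lemma sum_inner_multiset (s : Multiset V) (y : V) :
    ⟪s.sum, y⟫ = (s.map (fun x => ⟪x, y⟫)).sum := by
  induction s using Multiset.induction with
  | empty => simp
  | cons a s ih => simp [inner_add_left, ih]

lemma multiset_sum_pairing_int (s : Multiset V) (hs : ∀ γ ∈ s, γ ∈ P.R) {α : V}
    (hα : α ∈ P.R) : ∃ n : ℤ, ⟪s.sum, P.coroot α⟫ = n := by
  induction s using Multiset.induction with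
  | empty => exact ⟨0, by simp⟩
  | cons a s ih =>
    obtain ⟨n, hn⟩ := ih (fun γ hγ => hs γ (Multiset.mem_cons_of_mem hγ))
    obtain ⟨m, hm⟩ := P.pairing_int (hs a (Multiset.mem_cons_self a s)) hα
    exact ⟨m + n, by rw [Multiset.sum_cons, inner_add_left, hm, hn]; push_cast; ring⟩

/-- Core lemma: a sum of roots all of whose pairings with coroots are `< 2` is zero. -/
lemma core : ∀ n : ℕ, ∀ s : Multiset V, s.card = n → (∀ γ ∈ s, γ ∈ P.R) →
    (∀ α ∈ P.R, ⟪s.sum, P.coroot α⟫ < 2) → s.sum = 0 := by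
  intro n
  induction n using Nat.strong_induction_on with
  | _ n ih =>
    classical
    intro s hcard hmem hpair
    by_cases hz : s.sum = 0
    · exact hz
    set lam : V := s.sum with hlam
    have hpos : 0 < ⟪lam, lam⟫ :=
      lt_of_le_of_ne real_inner_self_nonneg (fun h => hz (inner_self_eq_zero.mp h.symm))
    -- find γᵢ ∈ s with ⟪lam, γᵢ⟫ > 0
    have hex : ∃ γ ∈ s, 0 < ⟪lam, γ⟫ := by
      by_contra hcon
      push_neg at hcon
      have : ⟪lam, lam⟫ ≤ 0 := by
        have h1 : ⟪lam, lam⟫ = ⟪lam, s.sum⟫ := by rw [hlam]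
        have h2 : ⟪lam, s.sum⟫ = (s.map (fun x => ⟪lam, x⟫)).sum := by
          rw [real_inner_comm, sum_inner_multiset]
          congr 1
          exact Multiset.map_congr rfl (fun x _ => real_inner_comm lam x)
        rw [h1, h2]
        have : ∀ x ∈ s.map (fun x => ⟪lam, x⟫), x ≤ 0 := by
          intro x hx
          obtain ⟨γ, hγ, rfl⟩ := Multiset.mem_map.mp hx
          exact hcon γ hγ
        -- sum of nonpositive is nonpositive
        have := Multiset.sum_nonneg (s := (s.map (fun x => ⟪lam, x⟫)).map (fun x => -x))
          (by intro x hx; obtain ⟨y, hy, rfl⟩ := Multiset.mem_map.mp hx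
              simpa using this y hy)
        rw [Multiset.sum_map_neg'] at this
        simpa using this
      linarith
    obtain ⟨γi, hγi, hγipos⟩ := hex
    have hγiR : γi ∈ P.R := hmem γi hγi
    have hci := P.inner_self_pos_of_mem hγiR
    -- pairing lam γᵢ = 1
    have hp1 : ⟪lam, P.coroot γi⟫ = 1 := by
      obtain ⟨N, hN⟩ := P.multiset_sum_pairing_int s hmem hγiR
      have hNpos : (0 : ℝ) < N := by
        rw [← hN, ← hlam, P.inner_coroot_eq]
        positivity
      have hNlt : (N : ℝ) < 2 := by
        rw [← hN, ← hlam]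
        exact hpair γi hγiR
      have : N = 1 := by
        have h0 : 0 < N := by exact_mod_cast hNpos
        have h2 : N < 2 := by exact_mod_cast hNlt
        omega
      rw [← hlam] at hN
      rw [hN, this, Int.cast_one]
    -- the rest of the multiset pairs to -1 with γᵢ
    set s' : Multiset V := s.erase γi with hs'
    have hcons : s = γi ::ₘ s' := (Multiset.cons_erase hγi).symm
    have hsum' : s'.sum = lam - γi := by
      have : s.sum = γi + s'.sum := by rw [hcons, Multiset.sum_cons]
      rw [hlam, this]; abel
    have hrest : ⟪s'.sum, P.coroot γi⟫ = -1 := by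
      rw [hsum', inner_sub_left, hp1, P.inner_coroot_self hγiR]
      norm_num
    -- find γⱼ ∈ s' with ⟪γⱼ, coroot γᵢ⟫ < 0
    have hexj : ∃ γ ∈ s', ⟪γ, P.coroot γi⟫ < 0 := by
      by_contra hcon
      push_neg at hcon
      have : (0 : ℝ) ≤ ⟪s'.sum, P.coroot γi⟫ := by
        rw [sum_inner_multiset]
        apply Multiset.sum_nonneg
        intro x hx
        obtain ⟨γ, hγ, rfl⟩ := Multiset.mem_map.mp hx
        exact hcon γ hγ
      rw [hrest] at this; linarith
    obtain ⟨γj, hγj, hγjneg⟩ := hexj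
    have hγjR : γj ∈ P.R := hmem γj (Multiset.mem_of_mem_erase hγj)
    have hγjinner : ⟪γj, γi⟫ < 0 := by
      rw [P.inner_coroot_eq] at hγjneg
      by_contra hcon
      push_neg at hcon
      have : 0 ≤ 2 * ⟪γj, γi⟫ / ⟪γi, γi⟫ := by positivity
      linarith
    have hn1 : 1 ≤ n := by
      rw [← hcard, hcons]; simp
    set s'' : Multiset V := s'.erase γj with hs''
    have hcons' : s' = γj ::ₘ s'' := (Multiset.cons_erase hγj).symm
    have hsum'' : s''.sum = lam - γi - γj := by
      have h1 : s'.sum = γj + s''.sum := by rw [hcons', Multiset.sum_cons]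
      rw [hsum'] at h1
      rw [h1]
      abel
    have hcard'' : s''.card = n - 2 := by
      rw [hs'', hs', Multiset.card_erase_of_mem hγj, Multiset.card_erase_of_mem hγi, hcard]
      simp only [Nat.pred_eq_sub_one]
      omega
    have hn2 : 2 ≤ n := by
      have : 1 ≤ s'.card := Multiset.card_pos_iff_exists_mem.mpr ⟨γj, hγj⟩
      rw [hs', Multiset.card_erase_of_mem hγi, hcard] at this
      simp only [Nat.pred_eq_sub_one] at this
      omega
    by_cases hopp : γj = -γi
    · -- drop γᵢ and γⱼ
      have hsum0 : s''.sum = lam := by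
        rw [hsum'', hopp]; abel
      have := ih (n - 2) (by omega) s'' hcard''
        (fun γ hγ => hmem γ (Multiset.mem_of_mem_erase (Multiset.mem_of_mem_erase hγ)))
        (by rw [hsum0]; exact hpair)
      rw [hsum0] at this
      exact this
    · -- replace γᵢ, γⱼ by their sum
      have hδ : γj + γi ∈ P.R := P.add_mem hγiR hγjR hγjinner hopp
      set T : Multiset V := (γj + γi) ::ₘ s'' with hT
      have hTsum : T.sum = lam := by
        rw [hT, Multiset.sum_cons, hsum'']; abel
      have hTcard : T.card = n - 1 := by
        rw [hT, Multiset.card_cons, hcard'']; omega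
      have := ih (n - 1) (by omega) T hTcard
        (by
          intro γ hγ
          rcases Multiset.mem_cons.mp hγ with h | h
          · rw [h]; exact hδ
          · exact hmem γ (Multiset.mem_of_mem_erase (Multiset.mem_of_mem_erase h)))
        (by rw [hTsum]; exact hpair)
      rw [hTsum] at this
      exact this

end RootSystemData

/-- A nonzero dominant weight in the root lattice pairs at least `2` with `α₀^∨`. -/
theorem pairing_hsr_ge_two {V : Type*} [NormedAddCommGroup V] [InnerProductSpace ℝ V] (P : RootSystemData V)
    (β : V) (hd : P.IsDominant β) (h0 : β ≠ 0) (hl : P.InRootLattice β) :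
    2 ≤ P.pairing β P.hsr := by
  classical
  by_contra hk
  push_neg at hk
  have hhsrR : P.hsr ∈ P.R := P.pos_subset P.hsr_pos
  -- every pairing of β with a coroot is at most the pairing with hsr's coroot
  have hdom : ∀ α ∈ P.R, ⟪β, P.coroot α⟫ ≤ P.pairing β P.hsr := by
    intro α hα
    obtain ⟨c, hc⟩ := P.hsr_coroot_highest α hα
    have hkey : P.pairing β P.hsr - ⟪β, P.coroot α⟫
        = ∑ s ∈ P.simples, (c s : ℝ) * ⟪β, P.coroot s⟫ := by
      have h1 := congrArg (fun v => ⟪β, v⟫) hc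
      simp only [inner_sub_right, inner_sum, real_inner_smul_right] at h1
      simp only [RootSystemData.pairing, RootSystemData.coroot, real_inner_smul_right]
      exact h1
    have hnn : 0 ≤ ∑ s ∈ P.simples, (c s : ℝ) * ⟪β, P.coroot s⟫ :=
      Finset.sum_nonneg (fun s hs => mul_nonneg (by positivity) (hd s hs))
    linarith
  have hlt : ∀ α ∈ P.R, ⟪β, P.coroot α⟫ < 2 :=
    fun α hα => lt_of_le_of_lt (hdom α hα) hk
  obtain ⟨c, hc⟩ := hl
  -- build a multiset of roots summing to β
  have build : ∀ t : Finset V, t ⊆ P.simples →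
      ∃ M : Multiset V, (∀ γ ∈ M, γ ∈ P.R) ∧ M.sum = ∑ s ∈ t, (c s : ℝ) • s := by
    intro t
    induction t using Finset.induction_on with
    | empty => exact fun _ => ⟨0, by simp, by simp⟩
    | @insert a t hat ih =>
      intro hsub
      obtain ⟨M, hM, hMs⟩ := ih (fun x hx => hsub (Finset.mem_insert_of_mem hx))
      have haR : a ∈ P.R := P.pos_subset (P.simples_subset (hsub (Finset.mem_insert_self a t)))
      refine ⟨Multiset.replicate (c a).natAbs (if 0 ≤ c a then a else -a) + M, ?_, ?_⟩
      · intro γ hγ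
        rcases Multiset.mem_add.mp hγ with h | h
        · rw [Multiset.eq_of_mem_replicate h]
          split
          · exact haR
          · exact P.neg_mem haR
        · exact hM γ h
      · rw [Multiset.sum_add, hMs, Finset.sum_insert hat, Multiset.sum_replicate]
        congr 1
        rcases le_or_gt 0 (c a) with h | h
        · rw [if_pos h, ← Nat.cast_smul_eq_nsmul ℝ]
          congr 1
          rw [Nat.cast_natAbs, abs_of_nonneg h]
        · rw [if_neg (not_le.mpr h), ← Nat.cast_smul_eq_nsmul ℝ, smul_neg, ← neg_smul]
          congr 1
          rw [Nat.cast_natAbs, abs_of_nonpos h.le]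
          push_cast
          ring
  obtain ⟨M, hM, hMs⟩ := build P.simples (subset_refl _)
  have hMβ : M.sum = β := by rw [hMs, ← hc]
  have hzero := P.core M.card M rfl hM (by rw [hMβ]; exact hlt)
  rw [hMβ] at hzero
  exact h0 hzero
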